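/- Let $a_0 = 1$ and define $a_1, \ldots, a_k \in \mathbb{C}$ recursively by $a_s = \frac{1}{2}\left(\binom{2k+1}{s} - \sum_{l+m=s,\, 0<l,m<s} a_l a_m\right)$ (so that $\sum_{l+m=s,\,0\le l,m\le k} a_l a_m = \binom{2k+1}{s}$ for $s = 0,1,\ldots,k$). Then for $k \geq 3$ and $r \in \{k-1, k, k+1, k+2\}$, the polynomial $(X+Z^4)^{2k+1} - \left(Y + Z^r + \sum_{l=0}^{k} a_l X^l Z^{4k+2-4l}\right)^2 \in \mathbb{C}[X,Y,Z]$ has total degree exactly $4k+2+r$. -/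

import Mathlib

open MvPolynomial Finset

lemma coeff_single2_CXXX (s u t D : ℕ) (b : ℂ) :
    coeff (Finsupp.single 2 D)
      (C b * X 0 ^ s * X 1 ^ u * X 2 ^ t : MvPolynomial (Fin 3) ℂ) =
      if s = 0 ∧ u = 0 ∧ t = D then b else 0 := by
  have h : (C b * X 0 ^ s * X 1 ^ u * X 2 ^ t : MvPolynomial (Fin 3) ℂ)
      = monomial (Finsupp.single 0 s + Finsupp.single 1 u + Finsupp.single 2 t) b := by
    rw [X_pow_eq_monomial, X_pow_eq_monomial, X_pow_eq_monomial, C_mul_monomial,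
      monomial_mul, monomial_mul]
    simp
  rw [h, coeff_monomial]
  by_cases hc : s = 0 ∧ u = 0 ∧ t = D
  · obtain ⟨rfl, rfl, rfl⟩ := hc
    simp
  · rw [if_neg hc, if_neg]
    intro h2
    have h0 := DFunLike.congr_fun h2 0
    have h1 := DFunLike.congr_fun h2 1
    have h3 := DFunLike.congr_fun h2 2
    simp [Finsupp.single_apply] at h0 h1 h3
    exact hc ⟨h0, h1, h3⟩

lemma td_CXX (s t : ℕ) (b : ℂ) :
    (C b * X 0 ^ s * X 2 ^ t : MvPolynomial (Fin 3) ℂ).totalDegree ≤ s + t := by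
  refine (totalDegree_mul _ _).trans ?_
  have h2 : (C b * X 0 ^ s : MvPolynomial (Fin 3) ℂ).totalDegree ≤ s := by
    refine (totalDegree_mul _ _).trans ?_
    simp [totalDegree_C, totalDegree_X_pow]
  have := totalDegree_X_pow (R := ℂ) (2 : Fin 3) t
  omega

theorem degree_of_special_difference (k r : ℕ) (hk : 3 ≤ k)
    (hr : r ∈ ({k - 1, k, k + 1, k + 2} : Set ℕ))
    (a : ℕ → ℂ) (ha0 : a 0 = 1)
    (hrec : ∀ s ≤ k, ∑ p ∈ Finset.HasAntidiagonal.antidiagonal s, a p.1 * a p.2 =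
      ((2 * k + 1).choose s : ℂ)) :
    ((X 0 + X 2 ^ 4) ^ (2 * k + 1) -
      (X 1 + X 2 ^ r + ∑ l ∈ Finset.range (k + 1),
        C (a l) * X 0 ^ l * X 2 ^ (4 * k + 2 - 4 * l)) ^ 2 :
      MvPolynomial (Fin 3) ℂ).totalDegree = 4 * k + 2 + r := by
  have hrb : k - 1 ≤ r ∧ r ≤ k + 2 := by
    simp only [Set.mem_insert_iff, Set.mem_singleton_iff] at hr
    rcases hr with rfl | rfl | rfl | rfl <;> omega
  set W : MvPolynomial (Fin 3) ℂ :=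
    ∑ l ∈ Finset.range (k + 1), C (a l) * X 0 ^ l * X 2 ^ (4 * k + 2 - 4 * l) with hW
  have hC2 : (2 : MvPolynomial (Fin 3) ℂ) = C 2 := (map_ofNat C 2).symm
  -- expansion of P
  have hP : ((X 0 + X 2 ^ 4) ^ (2 * k + 1) : MvPolynomial (Fin 3) ℂ)
      = ∑ s ∈ Finset.range (2 * k + 1 + 1),
          C (((2 * k + 1).choose s : ℂ)) * X 0 ^ s * X 2 ^ (4 * (2 * k + 1 - s)) := by
    rw [add_pow]
    refine Finset.sum_congr rfl fun s _ => ?_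
    rw [C_eq_coe_nat, pow_mul]
    ring
  -- expansion of W * W
  have hW2 : W * W = ∑ p ∈ Finset.range (k + 1) ×ˢ Finset.range (k + 1),
      C (a p.1 * a p.2) * X 0 ^ (p.1 + p.2) * X 2 ^ (8 * k + 4 - 4 * (p.1 + p.2)) := by
    rw [hW, Finset.sum_mul_sum, Finset.sum_product]
    refine Finset.sum_congr rfl fun l hl => Finset.sum_congr rfl fun m hm => ?_
    rw [Finset.mem_range] at hl hm
    rw [C_mul, show 8 * k + 4 - 4 * (l + m) = (4 * k + 2 - 4 * l) + (4 * k + 2 - 4 * m) by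
      omega, pow_add, pow_add]
    ring
  -- the matched low-degree parts
  have hST : (∑ s ∈ Finset.range (k + 1),
        C (((2 * k + 1).choose s : ℂ)) * X 0 ^ s * X 2 ^ (4 * (2 * k + 1 - s))
        : MvPolynomial (Fin 3) ℂ)
      = ∑ p ∈ (Finset.range (k + 1) ×ˢ Finset.range (k + 1)).filter
          (fun p => p.1 + p.2 ≤ k),
          C (a p.1 * a p.2) * X 0 ^ (p.1 + p.2) * X 2 ^ (8 * k + 4 - 4 * (p.1 + p.2)) := by
    have hset : (Finset.range (k + 1) ×ˢ Finset.range (k + 1)).filter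
        (fun p => p.1 + p.2 ≤ k)
        = (Finset.range (k + 1)).biUnion (fun s => Finset.HasAntidiagonal.antidiagonal s) := by
      ext p
      simp only [Finset.mem_filter, Finset.mem_product, Finset.mem_biUnion,
        Finset.mem_range, Finset.HasAntidiagonal.mem_antidiagonal]
      constructor
      · intro h; exact ⟨p.1 + p.2, by omega, rfl⟩
      · rintro ⟨s, hs, hsum⟩; omega
    have hdisj : (↑(Finset.range (k + 1)) : Set ℕ).PairwiseDisjoint
        (fun s => (Finset.HasAntidiagonal.antidiagonal s : Finset (ℕ × ℕ))) := by
      intro x _ y _ hxy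
      refine Finset.disjoint_left.mpr fun p hp hp' => hxy ?_
      rw [Finset.HasAntidiagonal.mem_antidiagonal] at hp hp'
      omega
    rw [hset, Finset.sum_biUnion hdisj]
    refine Finset.sum_congr rfl fun s hs => ?_
    rw [Finset.mem_range] at hs
    calc (C (((2 * k + 1).choose s : ℂ)) * X 0 ^ s * X 2 ^ (4 * (2 * k + 1 - s))
          : MvPolynomial (Fin 3) ℂ)
        = (C (∑ p ∈ Finset.HasAntidiagonal.antidiagonal s, a p.1 * a p.2) *
            (X 0 ^ s * X 2 ^ (8 * k + 4 - 4 * s)) : MvPolynomial (Fin 3) ℂ) := by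
          rw [hrec s (by omega), show 4 * (2 * k + 1 - s) = 8 * k + 4 - 4 * s by omega,
            mul_assoc]
      _ = ∑ p ∈ Finset.HasAntidiagonal.antidiagonal s, C (a p.1 * a p.2) *
            (X 0 ^ s * X 2 ^ (8 * k + 4 - 4 * s)) := by
          rw [map_sum, Finset.sum_mul]
      _ = _ := by
          refine Finset.sum_congr rfl fun p hp => ?_
          rw [Finset.HasAntidiagonal.mem_antidiagonal] at hp
          rw [hp]
          ring
  -- key identity
  have hkey : ((X 0 + X 2 ^ 4) ^ (2 * k + 1) : MvPolynomial (Fin 3) ℂ) - W * W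
      = (∑ s ∈ Finset.Ico (k + 1) (2 * k + 1 + 1),
          C (((2 * k + 1).choose s : ℂ)) * X 0 ^ s * X 2 ^ (4 * (2 * k + 1 - s)))
        - ∑ p ∈ (Finset.range (k + 1) ×ˢ Finset.range (k + 1)).filter
            (fun p => ¬ p.1 + p.2 ≤ k),
            C (a p.1 * a p.2) * X 0 ^ (p.1 + p.2) * X 2 ^ (8 * k + 4 - 4 * (p.1 + p.2)) := by
    rw [hP, hW2,
      ← Finset.sum_range_add_sum_Ico _ (show k + 1 ≤ 2 * k + 1 + 1 by omega),
      ← Finset.sum_filter_add_sum_filter_not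
        (Finset.range (k + 1) ×ˢ Finset.range (k + 1)) (fun p => p.1 + p.2 ≤ k)]
    linear_combination hST
  -- upper bound pieces
  have hWtd : W.totalDegree ≤ 4 * k + 2 := by
    rw [hW]
    refine (totalDegree_finset_sum _ _).trans (Finset.sup_le fun l hl => ?_)
    rw [Finset.mem_range] at hl
    exact (td_CXX _ _ _).trans (by omega)
  have hAtd : ((∑ s ∈ Finset.Ico (k + 1) (2 * k + 1 + 1),
      C (((2 * k + 1).choose s : ℂ)) * X 0 ^ s * X 2 ^ (4 * (2 * k + 1 - s))
      : MvPolynomial (Fin 3) ℂ)).totalDegree ≤ 4 * k + 2 + r := by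
    refine (totalDegree_finset_sum _ _).trans (Finset.sup_le fun s hs => ?_)
    rw [Finset.mem_Ico] at hs
    exact (td_CXX _ _ _).trans (by omega)
  have hBtd : ((∑ p ∈ (Finset.range (k + 1) ×ˢ Finset.range (k + 1)).filter
      (fun p => ¬ p.1 + p.2 ≤ k),
      C (a p.1 * a p.2) * X 0 ^ (p.1 + p.2) * X 2 ^ (8 * k + 4 - 4 * (p.1 + p.2))
      : MvPolynomial (Fin 3) ℂ)).totalDegree ≤ 4 * k + 2 + r := by
    refine (totalDegree_finset_sum _ _).trans (Finset.sup_le fun p hp => ?_)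
    rw [Finset.mem_filter, Finset.mem_product, Finset.mem_range, Finset.mem_range] at hp
    have h1 := hp.1.1
    have h2 := hp.1.2
    have h3 := hp.2
    exact (td_CXX _ _ _).trans (by omega)
  have hPW : (((X 0 + X 2 ^ 4) ^ (2 * k + 1) : MvPolynomial (Fin 3) ℂ)
      - W * W).totalDegree ≤ 4 * k + 2 + r := by
    rw [hkey]
    exact (totalDegree_sub _ _).trans (max_le hAtd hBtd)
  have h2td : (2 : MvPolynomial (Fin 3) ℂ).totalDegree = 0 := by
    rw [hC2]; exact totalDegree_C 2
  have t1 : ((X 1 : MvPolynomial (Fin 3) ℂ) ^ 2).totalDegree ≤ 4 * k + 2 + r := by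
    rw [totalDegree_X_pow]; omega
  have t2 : ((X 2 : MvPolynomial (Fin 3) ℂ) ^ r * X 2 ^ r).totalDegree ≤ 4 * k + 2 + r := by
    rw [← pow_add, totalDegree_X_pow]; omega
  have t3 : ((2 : MvPolynomial (Fin 3) ℂ) * (X 1 * X 2 ^ r)).totalDegree ≤ 4 * k + 2 + r := by
    refine (totalDegree_mul _ _).trans ?_
    have := totalDegree_mul (X 1 : MvPolynomial (Fin 3) ℂ) (X 2 ^ r)
    rw [totalDegree_X, totalDegree_X_pow] at this
    omega
  have t4 : ((2 : MvPolynomial (Fin 3) ℂ) * (X 1 * W)).totalDegree ≤ 4 * k + 2 + r := by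
    refine (totalDegree_mul _ _).trans ?_
    have := totalDegree_mul (X 1 : MvPolynomial (Fin 3) ℂ) W
    rw [totalDegree_X] at this
    omega
  have t5 : ((2 : MvPolynomial (Fin 3) ℂ) * (X 2 ^ r * W)).totalDegree ≤ 4 * k + 2 + r := by
    refine (totalDegree_mul _ _).trans ?_
    have := totalDegree_mul (X 2 ^ r : MvPolynomial (Fin 3) ℂ) W
    rw [totalDegree_X_pow] at this
    omega
  have hupper : (((X 0 + X 2 ^ 4) ^ (2 * k + 1)
      - (X 1 + X 2 ^ r + W) ^ 2 : MvPolynomial (Fin 3) ℂ)).totalDegree ≤ 4 * k + 2 + r := by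
    have hsplit2 : ((X 0 + X 2 ^ 4) ^ (2 * k + 1)
        - (X 1 + X 2 ^ r + W) ^ 2 : MvPolynomial (Fin 3) ℂ)
        = ((X 0 + X 2 ^ 4) ^ (2 * k + 1) - W * W)
          - (X 1 ^ 2 + X 2 ^ r * X 2 ^ r + 2 * (X 1 * X 2 ^ r) + 2 * (X 1 * W)
            + 2 * (X 2 ^ r * W)) := by ring
    rw [hsplit2]
    refine (totalDegree_sub _ _).trans (max_le hPW ?_)
    refine (totalDegree_add _ _).trans (max_le ?_ t5)
    refine (totalDegree_add _ _).trans (max_le ?_ t4)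
    refine (totalDegree_add _ _).trans (max_le ?_ t3)
    exact (totalDegree_add _ _).trans (max_le t1 t2)
  -- lower bound: coefficient of Z^(4k+2+r) is -2
  have hco : coeff (Finsupp.single 2 (4 * k + 2 + r))
      ((X 0 + X 2 ^ 4) ^ (2 * k + 1)
        - (X 1 + X 2 ^ r + W) ^ 2 : MvPolynomial (Fin 3) ℂ) = -2 := by
    have hsp : ((X 0 + X 2 ^ 4) ^ (2 * k + 1)
        - (X 1 + X 2 ^ r + W) ^ 2 : MvPolynomial (Fin 3) ℂ)
        = (X 0 + X 2 ^ 4) ^ (2 * k + 1)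
          - (X 1 ^ 2 + X 2 ^ r * X 2 ^ r + W * W + 2 * (X 1 * X 2 ^ r) + 2 * (X 1 * W)
            + 2 * (X 2 ^ r * W)) := by ring
    have c0 : coeff (Finsupp.single 2 (4 * k + 2 + r))
        (((X 0 + X 2 ^ 4) ^ (2 * k + 1) : MvPolynomial (Fin 3) ℂ)) = 0 := by
      rw [hP, coeff_sum]
      refine Finset.sum_eq_zero fun s hs => ?_
      rw [show (C (((2 * k + 1).choose s : ℂ)) * X 0 ^ s * X 2 ^ (4 * (2 * k + 1 - s))
          : MvPolynomial (Fin 3) ℂ)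
          = C (((2 * k + 1).choose s : ℂ)) * X 0 ^ s * X 1 ^ 0 * X 2 ^ (4 * (2 * k + 1 - s))
          from by ring, coeff_single2_CXXX, if_neg (by omega)]
    have c1 : coeff (Finsupp.single 2 (4 * k + 2 + r))
        ((X 1 : MvPolynomial (Fin 3) ℂ) ^ 2) = 0 := by
      rw [show ((X 1 : MvPolynomial (Fin 3) ℂ) ^ 2)
          = C 1 * X 0 ^ 0 * X 1 ^ 2 * X 2 ^ 0 from by simp,
        coeff_single2_CXXX, if_neg (by omega)]
    have c2 : coeff (Finsupp.single 2 (4 * k + 2 + r))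
        ((X 2 : MvPolynomial (Fin 3) ℂ) ^ r * X 2 ^ r) = 0 := by
      rw [← pow_add, show ((X 2 : MvPolynomial (Fin 3) ℂ) ^ (r + r))
          = C 1 * X 0 ^ 0 * X 1 ^ 0 * X 2 ^ (r + r) from by simp,
        coeff_single2_CXXX, if_neg (by omega)]
    have c3 : coeff (Finsupp.single 2 (4 * k + 2 + r)) (W * W) = 0 := by
      rw [hW2, coeff_sum]
      refine Finset.sum_eq_zero fun p hp => ?_
      rw [show (C (a p.1 * a p.2) * X 0 ^ (p.1 + p.2) * X 2 ^ (8 * k + 4 - 4 * (p.1 + p.2))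
          : MvPolynomial (Fin 3) ℂ)
          = C (a p.1 * a p.2) * X 0 ^ (p.1 + p.2) * X 1 ^ 0
              * X 2 ^ (8 * k + 4 - 4 * (p.1 + p.2)) from by ring,
        coeff_single2_CXXX, if_neg (by omega)]
    have c4 : coeff (Finsupp.single 2 (4 * k + 2 + r))
        ((2 : MvPolynomial (Fin 3) ℂ) * (X 1 * X 2 ^ r)) = 0 := by
      rw [show ((2 : MvPolynomial (Fin 3) ℂ) * (X 1 * X 2 ^ r))
          = C 2 * X 0 ^ 0 * X 1 ^ 1 * X 2 ^ r from by rw [hC2]; ring,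
        coeff_single2_CXXX, if_neg (by omega)]
    have c5 : coeff (Finsupp.single 2 (4 * k + 2 + r))
        ((2 : MvPolynomial (Fin 3) ℂ) * (X 1 * W)) = 0 := by
      rw [hW, Finset.mul_sum, Finset.mul_sum, coeff_sum]
      refine Finset.sum_eq_zero fun l hl => ?_
      rw [show ((2 : MvPolynomial (Fin 3) ℂ)
          * (X 1 * (C (a l) * X 0 ^ l * X 2 ^ (4 * k + 2 - 4 * l))))
          = C (2 * a l) * X 0 ^ l * X 1 ^ 1 * X 2 ^ (4 * k + 2 - 4 * l)
          from by rw [C_mul, ← hC2]; ring,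
        coeff_single2_CXXX, if_neg (by omega)]
    have c6 : coeff (Finsupp.single 2 (4 * k + 2 + r))
        ((2 : MvPolynomial (Fin 3) ℂ) * (X 2 ^ r * W)) = 2 := by
      rw [hW, Finset.mul_sum, Finset.mul_sum, coeff_sum]
      have hterm : ∀ l ∈ Finset.range (k + 1),
          coeff (Finsupp.single 2 (4 * k + 2 + r))
            ((2 : MvPolynomial (Fin 3) ℂ)
              * (X 2 ^ r * (C (a l) * X 0 ^ l * X 2 ^ (4 * k + 2 - 4 * l))))
          = if l = 0 then 2 * a l else 0 := by
        intro l hl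
        rw [show ((2 : MvPolynomial (Fin 3) ℂ)
            * (X 2 ^ r * (C (a l) * X 0 ^ l * X 2 ^ (4 * k + 2 - 4 * l))))
            = C (2 * a l) * X 0 ^ l * X 1 ^ 0 * X 2 ^ (r + (4 * k + 2 - 4 * l))
            from by rw [C_mul, ← hC2]; ring,
          coeff_single2_CXXX]
        by_cases hl0 : l = 0
        · subst hl0; rw [if_pos (by omega), if_pos rfl]
        · rw [if_neg (by omega), if_neg hl0]
      rw [Finset.sum_congr rfl hterm,
        Finset.sum_ite_eq' (Finset.range (k + 1)) 0 (fun l => 2 * a l)]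
      simp [ha0]
    rw [hsp, coeff_sub, coeff_add, coeff_add, coeff_add, coeff_add, coeff_add,
      c0, c1, c2, c3, c4, c5, c6]
    norm_num
  have hlow : 4 * k + 2 + r ≤ (((X 0 + X 2 ^ 4) ^ (2 * k + 1)
      - (X 1 + X 2 ^ r + W) ^ 2 : MvPolynomial (Fin 3) ℂ)).totalDegree := by
    have hmem : Finsupp.single 2 (4 * k + 2 + r) ∈ ((X 0 + X 2 ^ 4) ^ (2 * k + 1)
        - (X 1 + X 2 ^ r + W) ^ 2 : MvPolynomial (Fin 3) ℂ).support := by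
      rw [mem_support_iff, hco]; norm_num
    have h := le_totalDegree hmem
    rw [Finsupp.sum_single_index rfl] at h
    exact h
  exact le_antisymm hupper hlow
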